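/- Let ρ be a state on ℂ^m ⊗ ℂ^n. If rank ρ < max{rank(Tr_B ρ), rank(Tr_A ρ)}, then ρ is entangled (not separable). -/

import Mathlib

open scoped BigOperators ComplexOrder
open Kronecker

noncomputable section

/-- The `j`-th standard basis vector of `ℂ^q` (zero if `j ≥ q`). -/
def ee (q : ℕ) (j : ℕ) : Fin q → ℂ := fun b => if (b : ℕ) = j then 1 else 0

/-- Tensor (Kronecker) product of two vectors. -/
def tens {A B : Type*} (x : A → ℂ) (y : B → ℂ) : A × B → ℂ := fun p => x p.1 * y p.2

/-- A matrix on `ℂ^A ⊗ ℂ^B` is separable if it is a finite sum of Kronecker products of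
rank-one positive semidefinite matrices. -/
def IsSep {A B : Type*} (ρ : Matrix (A × B) (A × B) ℂ) : Prop :=
  ∃ (T : ℕ) (x : Fin T → A → ℂ) (y : Fin T → B → ℂ),
    ρ = ∑ t : Fin T, Matrix.of (fun p q : A × B =>
      (x t p.1 * (starRingEnd ℂ) (x t q.1)) * (y t p.2 * (starRingEnd ℂ) (y t q.2)))

/-- Partial trace over the middle (B) system of the rank-one projection `|Ψ⟩⟨Ψ|`. -/
def TrB {A B : Type*} [Fintype B] {k : ℕ} (Ψ : A × B × Fin k → ℂ) :
    Matrix (A × Fin k) (A × Fin k) ℂ :=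
  Matrix.of fun p q => ∑ b : B, Ψ (p.1, b, p.2) * (starRingEnd ℂ) (Ψ (q.1, b, q.2))

/-- A subspace `V ⊆ ℂ^A ⊗ ℂ^B` is entanglement breaking if for every ancilla dimension
`k ≥ 1` and every `Ψ` whose slices all lie in `V`, the matrix `Tr_B |Ψ⟩⟨Ψ|` is separable. -/
def IsEBSpace {A B : Type*} [Fintype B] (V : Submodule ℂ (A × B → ℂ)) : Prop :=
  ∀ (k : ℕ), 1 ≤ k → ∀ Ψ : A × B × Fin k → ℂ,
    (∀ ℓ : Fin k, (fun ab : A × B => Ψ (ab.1, ab.2, ℓ)) ∈ V) → IsSep (TrB Ψ)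

/-- Partial transpose on the B system. -/
def PT {A B : Type*} (ρ : Matrix (A × B) (A × B) ℂ) : Matrix (A × B) (A × B) ℂ :=
  Matrix.of fun p q => ρ (p.1, q.2) (q.1, p.2)

/-- Partial trace over the B system of a matrix. -/
def trBmat {A B : Type*} [Fintype B] (ρ : Matrix (A × B) (A × B) ℂ) : Matrix A A ℂ :=
  Matrix.of fun a a' => ∑ b : B, ρ (a, b) (a', b)

/-- Partial trace over the A system of a matrix. -/
def trAmat {A B : Type*} [Fintype A] (ρ : Matrix (A × B) (A × B) ℂ) : Matrix B B ℂ :=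
  Matrix.of fun b b' => ∑ a : A, ρ (a, b) (a, b')
open Module Submodule Matrix in
lemma key_lemma {T : ℕ} {A B : Type*} (x : Fin T → A → ℂ) (y : Fin T → B → ℂ) :
    finrank ℂ (span ℂ (x '' {t | y t ≠ 0})) ≤
      finrank ℂ (span ℂ (Set.range fun t => tens (x t) (y t))) := by
  classical
  obtain ⟨s, hs_sub, hs_span, hs_li⟩ := exists_linearIndependent ℂ (x '' {t | y t ≠ 0})
  have hsfin : s.Finite := ((Set.toFinite _).image x).subset hs_sub
  haveI : Fintype s := hsfin.fintype
  set W := span ℂ (Set.range fun t => tens (x t) (y t)) with hW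
  haveI : FiniteDimensional ℂ W := FiniteDimensional.span_of_finite ℂ (Set.finite_range _)
  choose σ hy hx using fun v : s => hs_sub v.2
  have hmem : ∀ v : s, tens (v : A → ℂ) (y (σ v)) ∈ W := by
    intro v
    have : tens (v : A → ℂ) (y (σ v)) = tens (x (σ v)) (y (σ v)) := by rw [hx]
    rw [this]
    exact subset_span ⟨σ v, rfl⟩
  set F : s → W := fun v => ⟨tens (v : A → ℂ) (y (σ v)), hmem v⟩ with hF
  have hFli : LinearIndependent ℂ F := by
    apply LinearIndependent.of_comp W.subtype
    rw [Fintype.linearIndependent_iff]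
    intro g hg v0
    obtain ⟨b, hb⟩ := Function.ne_iff.mp (hy v0)
    have hgab : ∀ a, ∑ v : s, g v * ((v : A → ℂ) a * y (σ v) b) = 0 := by
      intro a
      have := congrFun hg (a, b)
      simpa [Finset.sum_apply, tens, F] using this
    have h2 : ∑ v : s, (g v * y (σ v) b) • ((v : A → ℂ)) = 0 := by
      funext a
      have : (∑ v : s, (g v * y (σ v) b) • ((v : A → ℂ))) a
          = ∑ v : s, (g v * y (σ v) b) * (v : A → ℂ) a := by
        simp [Finset.sum_apply]
      rw [Pi.zero_apply, this, ← hgab a]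
      exact Finset.sum_congr rfl fun v _ => by ring
    have := Fintype.linearIndependent_iff.mp hs_li (fun v => g v * y (σ v) b) h2 v0
    exact (mul_eq_zero.mp this).resolve_right hb
  have hcard : Fintype.card s ≤ finrank ℂ W := hFli.fintype_card_le_finrank
  have hfr : finrank ℂ (span ℂ (x '' {t | y t ≠ 0})) = Fintype.card s := by
    rw [← hs_span, finrank_span_set_eq_card hs_li, Set.toFinset_card]
  omega

open Module Submodule Matrix in
lemma partial_rank_le {T : ℕ} {A B : Type*} [Fintype A] [Fintype B]
    (x : Fin T → A → ℂ) (y : Fin T → B → ℂ) (M : Matrix A A ℂ)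
    (hM : M = Matrix.of fun a a' => ∑ t,
      (∑ b, y t b * (starRingEnd ℂ) (y t b)) * (x t a * (starRingEnd ℂ) (x t a'))) :
    M.rank ≤ finrank ℂ (span ℂ (Set.range fun t => tens (x t) (y t))) := by
  classical
  set c : Fin T → ℝ := fun t => ∑ b, Complex.normSq (y t b) with hcdef
  have hc0 : ∀ t, 0 ≤ c t := fun t => Finset.sum_nonneg fun b _ => Complex.normSq_nonneg _
  have hc : ∀ t, (∑ b, y t b * (starRingEnd ℂ) (y t b)) = ((c t : ℝ) : ℂ) := by
    intro t
    rw [hcdef]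
    push_cast
    exact Finset.sum_congr rfl fun b _ => Complex.mul_conj _
  set x' : Fin T → A → ℂ := fun t => ((Real.sqrt (c t) : ℝ) : ℂ) • x t with hx'
  have hss : ∀ t, ((Real.sqrt (c t) : ℝ) : ℂ) * ((Real.sqrt (c t) : ℝ) : ℂ) = ((c t : ℝ) : ℂ) := by
    intro t
    rw [← Complex.ofReal_mul, Real.mul_self_sqrt (hc0 t)]
  have hfac : M = (Matrix.of fun a t => x' t a) * (Matrix.of fun a t => x' t a)ᴴ := by
    rw [hM]
    ext a a'
    simp only [Matrix.mul_apply, Matrix.of_apply, Matrix.conjTranspose_apply, Complex.star_def]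
    refine Finset.sum_congr rfl fun t _ => ?_
    simp only [hx', Pi.smul_apply, smul_eq_mul]
    rw [hc t, _root_.map_mul, Complex.conj_ofReal, ← hss t]
    ring
  have hrk : M.rank = finrank ℂ (span ℂ (Set.range x')) := by
    rw [hfac, Matrix.rank_self_mul_conjTranspose, Matrix.rank_eq_finrank_span_cols]
    congr 1
  rw [hrk]
  haveI : FiniteDimensional ℂ (span ℂ (x' '' {t | y t ≠ 0})) :=
    FiniteDimensional.span_of_finite ℂ ((Set.toFinite _).image x')
  haveI : FiniteDimensional ℂ (span ℂ (Set.range fun t => tens (x t) (y t))) :=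
    FiniteDimensional.span_of_finite ℂ (Set.finite_range _)
  have h1 : finrank ℂ (span ℂ (Set.range x')) ≤ finrank ℂ (span ℂ (x' '' {t | y t ≠ 0})) := by
    apply Submodule.finrank_mono
    rw [span_le]
    rintro v ⟨t, rfl⟩
    by_cases h : y t = 0
    · have hct : c t = 0 := by
        simp [hcdef, h]
      have : x' t = 0 := by
        rw [hx']
        simp [hct]
      rw [this]
      exact Submodule.zero_mem _
    · exact subset_span ⟨t, h, rfl⟩
  have h2 := key_lemma x' y
  have h3 : finrank ℂ (span ℂ (Set.range fun t => tens (x' t) (y t)))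
      ≤ finrank ℂ (span ℂ (Set.range fun t => tens (x t) (y t))) := by
    apply Submodule.finrank_mono
    rw [span_le]
    rintro v ⟨t, rfl⟩
    have : tens (x' t) (y t) = ((Real.sqrt (c t) : ℝ) : ℂ) • tens (x t) (y t) := by
      funext p
      simp only [tens, x', Pi.smul_apply, smul_eq_mul]
      ring
    show tens (x' t) (y t) ∈ _
    rw [this]
    exact Submodule.smul_mem _ _ (subset_span ⟨t, rfl⟩)
  exact h1.trans (h2.trans h3)

open Module Submodule Matrix in
/-- An `m × n` state of rank `r` is entangled if `max{rank ρ_A, rank ρ_B} > r`. -/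
theorem entangled_of_rank_lt {m n : ℕ}
    (ρ : Matrix (Fin m × Fin n) (Fin m × Fin n) ℂ)
    (hpsd : ρ.PosSemidef) (htr : ρ.trace = 1)
    (hrank : ρ.rank < max (trBmat ρ).rank (trAmat ρ).rank) :
    ¬ IsSep ρ := by
  rintro ⟨T, x, y, hρ⟩
  set Z : Matrix (Fin m × Fin n) (Fin T) ℂ := Matrix.of fun p t => tens (x t) (y t) p with hZ
  have hZZ : ρ = Z * Zᴴ := by
    rw [hρ]
    ext p q
    simp only [Matrix.sum_apply, Matrix.mul_apply, Matrix.of_apply, Matrix.conjTranspose_apply,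
      Complex.star_def, hZ, tens, _root_.map_mul]
    exact Finset.sum_congr rfl fun t _ => by ring
  have hr : ρ.rank = finrank ℂ (span ℂ (Set.range fun t => tens (x t) (y t))) := by
    rw [hZZ, Matrix.rank_self_mul_conjTranspose, Matrix.rank_eq_finrank_span_cols]
    congr 1
  have hB : (trBmat ρ).rank ≤ ρ.rank := by
    rw [hr]
    apply partial_rank_le x y
    ext a a'
    rw [hρ]
    simp only [trBmat, Matrix.of_apply, Matrix.sum_apply]
    rw [Finset.sum_comm]
    refine Finset.sum_congr rfl fun t _ => ?_
    rw [Finset.sum_mul]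
    exact Finset.sum_congr rfl fun b _ => by ring
  have hA : (trAmat ρ).rank ≤ ρ.rank := by
    have h := partial_rank_le y x (trAmat ρ) (by
      ext b b'
      rw [hρ]
      simp only [trAmat, Matrix.of_apply, Matrix.sum_apply]
      rw [Finset.sum_comm]
      refine Finset.sum_congr rfl fun t _ => ?_
      rw [Finset.sum_mul])
    rw [hr]
    refine h.trans (le_of_eq ?_)
    set e : ((Fin m × Fin n) → ℂ) ≃ₗ[ℂ] ((Fin n × Fin m) → ℂ) :=
      LinearEquiv.funCongrLeft ℂ ℂ (Equiv.prodComm (Fin n) (Fin m)) with he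
    have hmap : Submodule.map e.toLinearMap (span ℂ (Set.range fun t => tens (x t) (y t)))
        = span ℂ (Set.range fun t => tens (y t) (x t)) := by
      rw [Submodule.map_span, ← Set.range_comp]
      congr 1
      refine congrArg Set.range (funext fun t => ?_)
      funext q
      simp [he, LinearEquiv.funCongrLeft, LinearMap.funLeft, tens, mul_comm]
    calc finrank ℂ (span ℂ (Set.range fun t => tens (y t) (x t)))
        = finrank ℂ (Submodule.map e.toLinearMap (span ℂ (Set.range fun t => tens (x t) (y t)))) := by
          rw [hmap]
      _ = finrank ℂ (span ℂ (Set.range fun t => tens (x t) (y t))) :=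
          LinearEquiv.finrank_map_eq e _
  exact absurd hrank (not_lt.mpr (max_le hB hA))
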